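/- Let φ : ℝ⁴ → ℝ be smooth, with coordinates (t, x, y, z); latin indices a, b range over (t, x, y) with the 3-dimensional Minkowski metric diag(−1, 1, 1) used to raise them, the summation convention applies, and φ_z := ∂_zφ. Define L[φ] = −½ φ (φ^{,a}φ_{,a} + φ_z²) ∂_z²φ − ½ φ (φ^{,a}φ_{,a} + φ_z²) φ_{,b}^{,b}, L′[φ] = (1/6) φ_z⁴ + ½ (φ^{,a}φ_{,a} − φ φ_{,a}^{,a}) φ_z² + φ φ^{,a} (∂_z∂_aφ) φ_z − ½ φ φ^{,a}φ_{,a} φ_{,b}^{,b}, and F[φ] = ½ φ ( φ^{,a}φ_{,a} φ_z + (1/3) φ_z³ ). Then, as smooth functions on ℝ⁴, L′[φ] = L[φ] + ∂_z( F[φ] ) for every smooth φ; in particular L′ is of first order in z while L is of second order in z, and L and L′ have identical Euler–Lagrange expressions. -/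

import Mathlib

open scoped BigOperators

noncomputable section

/-- Partial derivative of a function on `ℝ⁴` in the coordinate direction `μ`. -/
def pd (μ : Fin 4) (f : (Fin 4 → ℝ) → ℝ) : (Fin 4 → ℝ) → ℝ :=
  fun x => fderiv ℝ f x (Pi.single μ 1)

/-- The evolutionary coordinate `z` (the last of `(t,x,y,z)`). -/
def zc : Fin 4 := Fin.last 3

/-- The 3-dimensional Minkowski metric `diag(−1,1,1)` on the `(t,x,y)` directions. -/
def η3 : Fin 3 → ℝ := fun a => if a = 0 then -1 else 1

/-- The second-order jet space of a scalar field on `ℝ⁴`. -/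
abbrev Jet2 := ℝ × (Fin 4 → ℝ) × (Fin 4 → Fin 4 → ℝ)

/-- The second-order jet prolongation of a scalar field `φ`. -/
def jet2 (φ : (Fin 4 → ℝ) → ℝ) (x : Fin 4 → ℝ) : Jet2 :=
  (φ x, fun μ => pd μ φ x, fun μ ν => pd μ (pd ν φ) x)

/-- Symmetrized direction for `∂/∂φ_{,μν}`. -/
def esym (μ ν : Fin 4) : Fin 4 → Fin 4 → ℝ :=
  fun ρ σ => (1 / 2 : ℝ) *
    ((if ρ = μ ∧ σ = ν then (1 : ℝ) else 0) + (if ρ = ν ∧ σ = μ then (1 : ℝ) else 0))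

/-- Euler–Lagrange expression of a second-order scalar Lagrangian along `φ`. -/
def ELscalar (Λ : Jet2 → ℝ) (φ : (Fin 4 → ℝ) → ℝ) : (Fin 4 → ℝ) → ℝ :=
  fun x =>
    fderiv ℝ Λ (jet2 φ x) ((1 : ℝ), 0, 0)
    - (∑ μ : Fin 4, pd μ (fun y => fderiv ℝ Λ (jet2 φ y) ((0 : ℝ), Pi.single μ 1, 0)) x)
    + ∑ μ : Fin 4, ∑ ν : Fin 4,
        pd μ (pd ν (fun y => fderiv ℝ Λ (jet2 φ y) ((0 : ℝ), 0, esym μ ν))) x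

/-- `φ^{,a}φ_{,a}` (3-dimensional contraction of first derivatives). -/
def S3 (w : Jet2) : ℝ := ∑ a : Fin 3, η3 a * w.2.1 a.castSucc * w.2.1 a.castSucc

/-- `φ_{,b}^{,b}` (3-dimensional wave operator `−∂_t² + ∂_x² + ∂_y²`). -/
def W3 (w : Jet2) : ℝ := ∑ a : Fin 3, η3 a * w.2.2 a.castSucc a.castSucc

/-- The split form of the Lagrangian `−½ φ (∂φ)² □φ`:
`L = −½ φ (φ^{,a}φ_{,a} + φ_z²) φ_{,zz} − ½ φ (φ^{,a}φ_{,a} + φ_z²) φ_{,b}^{,b}`. -/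
def Lsplit : Jet2 → ℝ :=
  fun w => -(1 / 2 : ℝ) * w.1 * (S3 w + (w.2.1 zc) ^ 2) * w.2.2 zc zc
    - (1 / 2 : ℝ) * w.1 * (S3 w + (w.2.1 zc) ^ 2) * W3 w

/-- The reduced Lagrangian
`L′ = (1/6)φ_z⁴ + ½(φ^{,a}φ_{,a} − φφ_{,a}^{,a})φ_z² + φφ^{,a}φ_{,za}φ_z
      − ½φφ^{,a}φ_{,a}φ_{,b}^{,b}`. -/
def Lred : Jet2 → ℝ :=
  fun w => (1 / 6 : ℝ) * (w.2.1 zc) ^ 4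
    + (1 / 2 : ℝ) * (S3 w - w.1 * W3 w) * (w.2.1 zc) ^ 2
    + w.1 * (∑ a : Fin 3, η3 a * w.2.1 a.castSucc * w.2.2 a.castSucc zc) * w.2.1 zc
    - (1 / 2 : ℝ) * w.1 * S3 w * W3 w

/-- The generating function `F = ½ φ (φ^{,a}φ_{,a} φ_z + (1/3) φ_z³)`. -/
def Fgen : Jet2 → ℝ :=
  fun w => (1 / 2 : ℝ) * w.1 * (S3 w * w.2.1 zc + (1 / 3 : ℝ) * (w.2.1 zc) ^ 3)



-- ========== auxiliary infrastructure ==========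

lemma wtop1 : ((⊤:ℕ∞) : WithTop ℕ∞) ≠ 0 := by
  simp

theorem ContDiff.pd {f : (Fin 4 → ℝ) → ℝ} (hf : ContDiff ℝ (⊤:ℕ∞) f) (μ : Fin 4) :
    ContDiff ℝ (⊤:ℕ∞) (pd μ f) :=
  (hf.fderiv_right (m := (⊤:ℕ∞)) le_rfl).clm_apply contDiff_const

@[simp] lemma pd_fold (μ : Fin 4) (f : (Fin 4 → ℝ) → ℝ) (x : Fin 4 → ℝ) :
    fderiv ℝ f x (Pi.single μ 1) = pd μ f x := rfl

theorem pd_comm {f : (Fin 4 → ℝ) → ℝ} (hf : ContDiff ℝ (⊤:ℕ∞) f) (μ ν : Fin 4) (x : Fin 4 → ℝ) :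
    pd μ (pd ν f) x = pd ν (pd μ f) x := by
  have hsym : IsSymmSndFDerivAt ℝ f x := hf.contDiffAt.isSymmSndFDerivAt (by
    refine le_trans ?_ (WithTop.coe_le_coe.mpr (le_top : (2:ℕ∞) ≤ ⊤)); norm_num)
  have hd : DifferentiableAt ℝ (fderiv ℝ f) x :=
    (hf.fderiv_right (m := (⊤:ℕ∞)) le_rfl).differentiable wtop1 |>.differentiableAt
  have h1 : ∀ ρ σ : Fin 4, pd ρ (pd σ f) x
      = fderiv ℝ (fderiv ℝ f) x (Pi.single ρ 1) (Pi.single σ 1) := by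
    intro ρ σ
    have : pd σ f = fun y => (fderiv ℝ f y) (Pi.single σ 1) := rfl
    rw [pd, this, fderiv_clm_apply hd (differentiableAt_const _)]
    simp
  rw [h1, h1]
  exact hsym (Pi.single μ 1) (Pi.single ν 1)

lemma zc_eq : zc = 3 := by decide
@[simp] lemma eta0 : η3 0 = -1 := rfl
@[simp] lemma eta1 : η3 1 = 1 := rfl
@[simp] lemma eta2 : η3 2 = 1 := rfl
@[simp] lemma cs0 : (0 : Fin 3).castSucc = 0 := rfl
@[simp] lemma cs1 : (1 : Fin 3).castSucc = 1 := rfl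
@[simp] lemma cs2 : (2 : Fin 3).castSucc = 2 := rfl
@[simp] lemma jet2_fst (φ : (Fin 4 → ℝ) → ℝ) (x : Fin 4 → ℝ) : (jet2 φ x).1 = φ x := rfl
@[simp] lemma jet2_snd1 (φ : (Fin 4 → ℝ) → ℝ) (x : Fin 4 → ℝ) (μ : Fin 4) :
    (jet2 φ x).2.1 μ = pd μ φ x := rfl
@[simp] lemma jet2_snd2 (φ : (Fin 4 → ℝ) → ℝ) (x : Fin 4 → ℝ) (μ ν : Fin 4) :
    (jet2 φ x).2.2 μ ν = pd μ (pd ν φ) x := rfl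

-- coordinate continuous linear maps on the jet space
def J0 : Jet2 →L[ℝ] ℝ := ContinuousLinearMap.fst ℝ ℝ _
def J1 (μ : Fin 4) : Jet2 →L[ℝ] ℝ :=
  (ContinuousLinearMap.proj μ).comp
    ((ContinuousLinearMap.fst ℝ (Fin 4 → ℝ) _).comp (ContinuousLinearMap.snd ℝ ℝ _))
def J2 (μ ν : Fin 4) : Jet2 →L[ℝ] ℝ :=
  ((ContinuousLinearMap.proj ν).comp
      (ContinuousLinearMap.proj (R := ℝ) (φ := fun _ : Fin 4 => Fin 4 → ℝ) μ)).comp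
    ((ContinuousLinearMap.snd ℝ (Fin 4 → ℝ) _).comp (ContinuousLinearMap.snd ℝ ℝ _))
@[simp] lemma J0_apply (v : Jet2) : J0 v = v.1 := rfl
@[simp] lemma J1_apply (μ : Fin 4) (v : Jet2) : J1 μ v = v.2.1 μ := rfl
@[simp] lemma J2_apply (μ ν : Fin 4) (v : Jet2) : J2 μ ν v = v.2.2 μ ν := rfl
lemma hJ0 (w : Jet2) : HasFDerivAt (fun w : Jet2 => w.1) J0 w := J0.hasFDerivAt
lemma hJ1 (μ : Fin 4) (w : Jet2) : HasFDerivAt (fun w : Jet2 => w.2.1 μ) (J1 μ) w :=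
  (J1 μ).hasFDerivAt
lemma hJ2 (μ ν : Fin 4) (w : Jet2) : HasFDerivAt (fun w : Jet2 => w.2.2 μ ν) (J2 μ ν) w :=
  (J2 μ ν).hasFDerivAt
lemma hS3 (w : Jet2) : HasFDerivAt S3
    (∑ a : Fin 3, ((η3 a * w.2.1 a.castSucc) • J1 a.castSucc
      + w.2.1 a.castSucc • (η3 a • J1 a.castSucc))) w :=
  HasFDerivAt.fun_sum fun a _ => ((hJ1 a.castSucc w).const_mul (η3 a)).mul (hJ1 a.castSucc w)
lemma hW3 (w : Jet2) : HasFDerivAt W3 (∑ a : Fin 3, η3 a • J2 a.castSucc a.castSucc) w :=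
  HasFDerivAt.fun_sum fun a _ => (hJ2 a.castSucc a.castSucc w).const_mul (η3 a)
def T3 (w : Jet2) : ℝ := ∑ a : Fin 3, η3 a * w.2.1 a.castSucc * w.2.2 a.castSucc zc
lemma hT3 (w : Jet2) : HasFDerivAt T3
    (∑ a : Fin 3, ((η3 a * w.2.1 a.castSucc) • J2 a.castSucc zc
      + w.2.2 a.castSucc zc • (η3 a • J1 a.castSucc))) w :=
  HasFDerivAt.fun_sum fun a _ => ((hJ1 a.castSucc w).const_mul (η3 a)).mul (hJ2 a.castSucc zc w)

theorem fderiv_Lsplit (w v : Jet2) : fderiv ℝ Lsplit w v =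
    -(1/2) * v.1 * ((S3 w + (w.2.1 3)^2) * (w.2.2 3 3 + W3 w))
    - (1/2) * w.1 * ((2 * (-(w.2.1 0 * v.2.1 0) + w.2.1 1 * v.2.1 1 + w.2.1 2 * v.2.1 2
        + w.2.1 3 * v.2.1 3)) * (w.2.2 3 3 + W3 w))
    - (1/2) * w.1 * ((S3 w + (w.2.1 3)^2)
        * (v.2.2 3 3 + (-(v.2.2 0 0) + v.2.2 1 1 + v.2.2 2 2))) := by
  have hLs : Lsplit = fun w : Jet2 => (-(1/2:ℝ)) * (w.1 * ((S3 w + w.2.1 zc * w.2.1 zc)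
      * (w.2.2 zc zc + W3 w))) := by
    funext w; simp only [Lsplit]; ring
  rw [hLs]
  have h : HasFDerivAt (fun w : Jet2 => (-(1/2:ℝ)) * (w.1 * ((S3 w + w.2.1 zc * w.2.1 zc)
      * (w.2.2 zc zc + W3 w)))) _ w :=
    (((hJ0 w).mul (((hS3 w).add ((hJ1 zc w).mul (hJ1 zc w))).mul
      ((hJ2 zc zc w).add (hW3 w)))).const_mul (-(1/2:ℝ)))
  rw [h.fderiv]
  simp only [ContinuousLinearMap.sub_apply, ContinuousLinearMap.add_apply,
    ContinuousLinearMap.smul_apply, ContinuousLinearMap.coe_sum', Finset.sum_apply,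
    J0_apply, J1_apply, J2_apply, smul_eq_mul, zc_eq, Pi.add_apply, Pi.mul_apply, Pi.sub_apply]
  simp only [S3, W3]
  rw [Fin.sum_univ_three, Fin.sum_univ_three, Fin.sum_univ_three, Fin.sum_univ_three]
  simp only [eta0, eta1, eta2, cs0, cs1, cs2]
  ring

theorem fderiv_Lred (w v : Jet2) : fderiv ℝ Lred w v =
    v.1 * (-(1/2)*W3 w*(w.2.1 3)^2 + T3 w * w.2.1 3 - (1/2)*S3 w*W3 w)
    + (∑ a : Fin 3, η3 a * (w.2.1 a.castSucc * (w.2.1 3)^2 + w.1 * w.2.2 a.castSucc 3 * w.2.1 3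
        - w.1 * w.2.1 a.castSucc * W3 w) * v.2.1 a.castSucc)
    + ((2/3)*(w.2.1 3)^3 + (S3 w - w.1 * W3 w) * w.2.1 3 + w.1 * T3 w) * v.2.1 3
    + (∑ a : Fin 3, η3 a * (-(1/2)) * w.1 * ((w.2.1 3)^2 + S3 w) * v.2.2 a.castSucc a.castSucc)
    + (∑ a : Fin 3, η3 a * w.1 * w.2.1 a.castSucc * w.2.1 3 * v.2.2 a.castSucc 3) := by
  have hLr : Lred = fun w : Jet2 =>
      (1/6:ℝ) * (w.2.1 zc * (w.2.1 zc * (w.2.1 zc * w.2.1 zc)))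
      + (1/2:ℝ) * ((S3 w - w.1 * W3 w) * (w.2.1 zc * w.2.1 zc))
      + w.1 * (T3 w * w.2.1 zc)
      - (1/2:ℝ) * (w.1 * (S3 w * W3 w)) := by
    funext w; simp only [Lred, T3]; ring
  rw [hLr]
  have h : HasFDerivAt (fun w : Jet2 =>
      (1/6:ℝ) * (w.2.1 zc * (w.2.1 zc * (w.2.1 zc * w.2.1 zc)))
      + (1/2:ℝ) * ((S3 w - w.1 * W3 w) * (w.2.1 zc * w.2.1 zc))
      + w.1 * (T3 w * w.2.1 zc)
      - (1/2:ℝ) * (w.1 * (S3 w * W3 w))) _ w :=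
    (((((hJ1 zc w).mul ((hJ1 zc w).mul ((hJ1 zc w).mul (hJ1 zc w)))).const_mul (1/6:ℝ)).add
      ((((hS3 w).sub ((hJ0 w).mul (hW3 w))).mul ((hJ1 zc w).mul (hJ1 zc w))).const_mul (1/2:ℝ))).add
      ((hJ0 w).mul ((hT3 w).mul (hJ1 zc w)))).sub
      (((hJ0 w).mul ((hS3 w).mul (hW3 w))).const_mul (1/2:ℝ))
  rw [h.fderiv]
  simp only [ContinuousLinearMap.sub_apply, ContinuousLinearMap.add_apply,
    ContinuousLinearMap.smul_apply, ContinuousLinearMap.coe_sum', Finset.sum_apply,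
    J0_apply, J1_apply, J2_apply, smul_eq_mul, zc_eq, Pi.add_apply, Pi.mul_apply, Pi.sub_apply]
  simp only [S3, W3, T3, zc_eq]
  simp only [Fin.sum_univ_three, eta0, eta1, eta2, cs0, cs1, cs2]
  ring

-- ========== pointwise structural lemmas for pd ==========

theorem pdd_add (μ : Fin 4) (x : Fin 4 → ℝ) (f g : (Fin 4 → ℝ) → ℝ)
    (hf : ContDiff ℝ (⊤:ℕ∞) f) (hg : ContDiff ℝ (⊤:ℕ∞) g) :
    pd μ (fun y => f y + g y) x = pd μ f x + pd μ g x := by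
  rw [show pd μ (fun y => f y + g y) x
      = fderiv ℝ (fun y => f y + g y) x (Pi.single μ 1) from rfl,
    fderiv_fun_add ((hf.differentiable wtop1) x) ((hg.differentiable wtop1) x)]
  simp

theorem pdd_mul (μ : Fin 4) (x : Fin 4 → ℝ) (f g : (Fin 4 → ℝ) → ℝ)
    (hf : ContDiff ℝ (⊤:ℕ∞) f) (hg : ContDiff ℝ (⊤:ℕ∞) g) :
    pd μ (fun y => f y * g y) x = pd μ f x * g x + f x * pd μ g x := by
  rw [show pd μ (fun y => f y * g y) x
      = fderiv ℝ (fun y => f y * g y) x (Pi.single μ 1) from rfl,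
    fderiv_fun_mul ((hf.differentiable wtop1) x) ((hg.differentiable wtop1) x)]
  simp; ring

theorem pdd_cmul (μ : Fin 4) (x : Fin 4 → ℝ) (c : ℝ) (f : (Fin 4 → ℝ) → ℝ)
    (hf : ContDiff ℝ (⊤:ℕ∞) f) :
    pd μ (fun y => c * f y) x = c * pd μ f x := by
  rw [show pd μ (fun y => c * f y) x
      = fderiv ℝ (fun y => c * f y) x (Pi.single μ 1) from rfl,
    fderiv_const_mul ((hf.differentiable wtop1) x) c]
  simp

theorem pdd_cmul_fun (μ : Fin 4) (c : ℝ) (f : (Fin 4 → ℝ) → ℝ)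
    (hf : ContDiff ℝ (⊤:ℕ∞) f) :
    pd μ (fun y => c * f y) = fun x => c * pd μ f x :=
  funext fun x => pdd_cmul μ x c f hf

theorem pdd_neg (μ : Fin 4) (x : Fin 4 → ℝ) (f : (Fin 4 → ℝ) → ℝ) :
    pd μ (fun y => -f y) x = -pd μ f x := by
  rw [show pd μ (fun y => -f y) x
      = fderiv ℝ (fun y => -f y) x (Pi.single μ 1) from rfl, fderiv_fun_neg]
  simp

theorem pdd_neg_fun (μ : Fin 4) (f : (Fin 4 → ℝ) → ℝ) :
    pd μ (fun y => -f y) = fun x => -pd μ f x :=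
  funext fun x => pdd_neg μ x f

@[simp] theorem pdd_zero_fun (μ : Fin 4) : pd μ (fun _ : Fin 4 → ℝ => (0:ℝ)) = fun _ => 0 := by
  funext x
  rw [show pd μ (fun _ : Fin 4 → ℝ => (0:ℝ)) x
    = fderiv ℝ (fun _ : Fin 4 → ℝ => (0:ℝ)) x (Pi.single μ 1) from rfl]
  simp

@[simp] theorem pdd_zero (μ : Fin 4) (x : Fin 4 → ℝ) :
    pd μ (fun _ : Fin 4 → ℝ => (0:ℝ)) x = 0 := by rw [pdd_zero_fun]

-- ========== the generating-function pieces along a field ==========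

def SSf (φ : (Fin 4 → ℝ) → ℝ) : (Fin 4 → ℝ) → ℝ :=
  fun y => ∑ a : Fin 3, η3 a * pd a.castSucc φ y * pd a.castSucc φ y
def PPf (φ : (Fin 4 → ℝ) → ℝ) : (Fin 4 → ℝ) → ℝ :=
  fun y => SSf φ y + pd 3 φ y * pd 3 φ y
def WWf (φ : (Fin 4 → ℝ) → ℝ) : (Fin 4 → ℝ) → ℝ :=
  fun y => ∑ a : Fin 3, η3 a * pd a.castSucc (pd a.castSucc φ) y
def GP (φ : (Fin 4 → ℝ) → ℝ) : (Fin 4 → ℝ) → ℝ :=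
  fun y => (1/2:ℝ) * (SSf φ y * pd 3 φ y + (1/3:ℝ) * (pd 3 φ y * (pd 3 φ y * pd 3 φ y)))
def GA (φ : (Fin 4 → ℝ) → ℝ) (a : Fin 3) : (Fin 4 → ℝ) → ℝ :=
  fun y => η3 a * (φ y * (pd a.castSucc φ y * pd 3 φ y))
def GZ (φ : (Fin 4 → ℝ) → ℝ) : (Fin 4 → ℝ) → ℝ :=
  fun y => (1/2:ℝ) * (φ y * PPf φ y)
def ISa (φ : (Fin 4 → ℝ) → ℝ) (a : Fin 3) : (Fin 4 → ℝ) → ℝ :=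
  fun y => -(η3 a) * (φ y * (pd a.castSucc φ y * (pd 3 (pd 3 φ) y + WWf φ y)))
def IS3 (φ : (Fin 4 → ℝ) → ℝ) : (Fin 4 → ℝ) → ℝ :=
  fun y => -(φ y * (pd 3 φ y * (pd 3 (pd 3 φ) y + WWf φ y)))

section smoothness
variable {φ : (Fin 4 → ℝ) → ℝ}

theorem sm_SSf (hφ : ContDiff ℝ (⊤:ℕ∞) φ) : ContDiff ℝ (⊤:ℕ∞) (SSf φ) :=
  ContDiff.sum fun a _ => (contDiff_const.mul (hφ.pd a.castSucc)).mul (hφ.pd a.castSucc)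
theorem sm_PPf (hφ : ContDiff ℝ (⊤:ℕ∞) φ) : ContDiff ℝ (⊤:ℕ∞) (PPf φ) :=
  (sm_SSf hφ).add ((hφ.pd 3).mul (hφ.pd 3))
theorem sm_WWf (hφ : ContDiff ℝ (⊤:ℕ∞) φ) : ContDiff ℝ (⊤:ℕ∞) (WWf φ) :=
  ContDiff.sum fun a _ => contDiff_const.mul ((hφ.pd a.castSucc).pd a.castSucc)
theorem sm_GP (hφ : ContDiff ℝ (⊤:ℕ∞) φ) : ContDiff ℝ (⊤:ℕ∞) (GP φ) :=
  contDiff_const.mul (((sm_SSf hφ).mul (hφ.pd 3)).add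
    (contDiff_const.mul ((hφ.pd 3).mul ((hφ.pd 3).mul (hφ.pd 3)))))
theorem sm_GA (hφ : ContDiff ℝ (⊤:ℕ∞) φ) (a : Fin 3) : ContDiff ℝ (⊤:ℕ∞) (GA φ a) :=
  contDiff_const.mul (hφ.mul ((hφ.pd a.castSucc).mul (hφ.pd 3)))
theorem sm_GZ (hφ : ContDiff ℝ (⊤:ℕ∞) φ) : ContDiff ℝ (⊤:ℕ∞) (GZ φ) :=
  contDiff_const.mul (hφ.mul (sm_PPf hφ))
theorem sm_ISa (hφ : ContDiff ℝ (⊤:ℕ∞) φ) (a : Fin 3) : ContDiff ℝ (⊤:ℕ∞) (ISa φ a) :=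
  contDiff_const.mul (hφ.mul ((hφ.pd a.castSucc).mul (((hφ.pd 3).pd 3).add (sm_WWf hφ))))
theorem sm_IS3 (hφ : ContDiff ℝ (⊤:ℕ∞) φ) : ContDiff ℝ (⊤:ℕ∞) (IS3 φ) :=
  (hφ.mul ((hφ.pd 3).mul (((hφ.pd 3).pd 3).add (sm_WWf hφ)))).neg

theorem pd_GP (hφ : ContDiff ℝ (⊤:ℕ∞) φ) (x : Fin 4 → ℝ) :
    pd 3 (GP φ) x =
      (∑ a : Fin 3, η3 a * pd a.castSucc φ x * pd 3 (pd a.castSucc φ) x) * pd 3 φ x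
      + (1/2:ℝ) * (SSf φ x + pd 3 φ x * pd 3 φ x) * pd 3 (pd 3 φ) x := by
  have hpx : ∀ μ : Fin 4, HasFDerivAt (pd μ φ) (fderiv ℝ (pd μ φ) x) x :=
    fun μ => ((hφ.pd μ).differentiable wtop1 x).hasFDerivAt
  have hSSx : HasFDerivAt (SSf φ)
      (∑ a : Fin 3, ((η3 a * pd a.castSucc φ x) • fderiv ℝ (pd a.castSucc φ) x
        + pd a.castSucc φ x • (η3 a • fderiv ℝ (pd a.castSucc φ) x))) x :=
    HasFDerivAt.fun_sum fun a _ => ((hpx a.castSucc).const_mul (η3 a)).mul (hpx a.castSucc)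
  have h := ((hSSx.fun_mul (hpx 3)).fun_add
    (((hpx 3).fun_mul ((hpx 3).fun_mul (hpx 3))).const_mul (1/3:ℝ))).const_mul (1/2:ℝ)
  rw [show pd 3 (GP φ) x = fderiv ℝ (GP φ) x (Pi.single 3 1) from rfl,
    show GP φ = (fun y => (1/2:ℝ) * (SSf φ y * pd 3 φ y
      + (1/3:ℝ) * (pd 3 φ y * (pd 3 φ y * pd 3 φ y)))) from rfl, h.fderiv]
  simp only [ContinuousLinearMap.add_apply, ContinuousLinearMap.smul_apply,
    ContinuousLinearMap.coe_sum', Finset.sum_apply, smul_eq_mul, pd_fold]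
  simp only [Fin.sum_univ_three]
  ring

theorem pd_GA (hφ : ContDiff ℝ (⊤:ℕ∞) φ) (a : Fin 3) (x : Fin 4 → ℝ) :
    pd 3 (GA φ a) x = η3 a * (pd 3 φ x * (pd a.castSucc φ x * pd 3 φ x)
      + φ x * (pd 3 (pd a.castSucc φ) x * pd 3 φ x
        + pd a.castSucc φ x * pd 3 (pd 3 φ) x)) := by
  have hφx : HasFDerivAt φ (fderiv ℝ φ x) x := (hφ.differentiable wtop1 x).hasFDerivAt
  have hpx : ∀ μ : Fin 4, HasFDerivAt (pd μ φ) (fderiv ℝ (pd μ φ) x) x :=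
    fun μ => ((hφ.pd μ).differentiable wtop1 x).hasFDerivAt
  have h := (hφx.fun_mul ((hpx a.castSucc).fun_mul (hpx 3))).const_mul (η3 a)
  rw [show pd 3 (GA φ a) x = fderiv ℝ (GA φ a) x (Pi.single 3 1) from rfl,
    show GA φ a = (fun y => η3 a * (φ y * (pd a.castSucc φ y * pd 3 φ y))) from rfl, h.fderiv]
  simp only [ContinuousLinearMap.add_apply, ContinuousLinearMap.smul_apply, smul_eq_mul, pd_fold]
  ring

theorem pd_GZ (hφ : ContDiff ℝ (⊤:ℕ∞) φ) (x : Fin 4 → ℝ) :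
    pd 3 (GZ φ) x = (1/2:ℝ) * (pd 3 φ x * PPf φ x
      + φ x * ((∑ a : Fin 3, 2 * η3 a * pd a.castSucc φ x * pd 3 (pd a.castSucc φ) x)
        + 2 * pd 3 φ x * pd 3 (pd 3 φ) x)) := by
  have hφx : HasFDerivAt φ (fderiv ℝ φ x) x := (hφ.differentiable wtop1 x).hasFDerivAt
  have hpx : ∀ μ : Fin 4, HasFDerivAt (pd μ φ) (fderiv ℝ (pd μ φ) x) x :=
    fun μ => ((hφ.pd μ).differentiable wtop1 x).hasFDerivAt
  have hSSx : HasFDerivAt (SSf φ)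
      (∑ a : Fin 3, ((η3 a * pd a.castSucc φ x) • fderiv ℝ (pd a.castSucc φ) x
        + pd a.castSucc φ x • (η3 a • fderiv ℝ (pd a.castSucc φ) x))) x :=
    HasFDerivAt.fun_sum fun a _ => ((hpx a.castSucc).const_mul (η3 a)).mul (hpx a.castSucc)
  have hPPx := hSSx.fun_add ((hpx 3).fun_mul (hpx 3))
  have h := (hφx.fun_mul hPPx).const_mul (1/2:ℝ)
  rw [show pd 3 (GZ φ) x = fderiv ℝ (GZ φ) x (Pi.single 3 1) from rfl,
    show GZ φ = (fun y => (1/2:ℝ) * (φ y * (SSf φ y + pd 3 φ y * pd 3 φ y))) from rfl, h.fderiv]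
  simp only [ContinuousLinearMap.add_apply, ContinuousLinearMap.smul_apply,
    ContinuousLinearMap.coe_sum', Finset.sum_apply, smul_eq_mul, pd_fold]
  simp only [PPf, SSf, Fin.sum_univ_three]
  ring

-- ========== pointwise identities for the Euler--Lagrange ingredients ==========

theorem h1s_lem (φ : (Fin 4 → ℝ) → ℝ) (y : Fin 4 → ℝ) :
    fderiv ℝ Lsplit (jet2 φ y) ((1:ℝ), 0, 0)
      = -(1/2:ℝ) * (PPf φ y * (pd 3 (pd 3 φ) y + WWf φ y)) := by
  rw [fderiv_Lsplit]
  simp only [jet2_fst, jet2_snd1, jet2_snd2, Pi.zero_apply, Prod.fst, Prod.snd,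
    S3, W3, PPf, SSf, WWf, Fin.sum_univ_three, eta0, eta1, eta2, cs0, cs1, cs2]
  ring

theorem h1r_lem (φ : (Fin 4 → ℝ) → ℝ) (y : Fin 4 → ℝ) :
    fderiv ℝ Lred (jet2 φ y) ((1:ℝ), 0, 0)
      = -(1/2:ℝ)*WWf φ y*(pd 3 φ y)^2
        + (∑ a : Fin 3, η3 a * pd a.castSucc φ y * pd a.castSucc (pd 3 φ) y) * pd 3 φ y
        - (1/2:ℝ)*SSf φ y*WWf φ y := by
  rw [fderiv_Lred]
  simp only [jet2_fst, jet2_snd1, jet2_snd2, Pi.zero_apply, Prod.fst, Prod.snd,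
    S3, W3, T3, zc_eq, SSf, WWf, Fin.sum_univ_three, eta0, eta1, eta2, cs0, cs1, cs2]
  ring

theorem h2s0_lem (φ : (Fin 4 → ℝ) → ℝ) (y : Fin 4 → ℝ) :
    fderiv ℝ Lsplit (jet2 φ y) ((0:ℝ), Pi.single 0 1, 0) = ISa φ 0 y := by
  rw [fderiv_Lsplit]
  simp only [jet2_fst, jet2_snd1, jet2_snd2, Pi.zero_apply, Prod.fst, Prod.snd]
  simp [S3, W3, ISa, IS3, WWf, Fin.sum_univ_three, Pi.single_apply]
  try ring

theorem h2s1_lem (φ : (Fin 4 → ℝ) → ℝ) (y : Fin 4 → ℝ) :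
    fderiv ℝ Lsplit (jet2 φ y) ((0:ℝ), Pi.single 1 1, 0) = ISa φ 1 y := by
  rw [fderiv_Lsplit]
  simp only [jet2_fst, jet2_snd1, jet2_snd2, Pi.zero_apply, Prod.fst, Prod.snd]
  simp [S3, W3, ISa, IS3, WWf, Fin.sum_univ_three, Pi.single_apply]
  try ring

theorem h2s2_lem (φ : (Fin 4 → ℝ) → ℝ) (y : Fin 4 → ℝ) :
    fderiv ℝ Lsplit (jet2 φ y) ((0:ℝ), Pi.single 2 1, 0) = ISa φ 2 y := by
  rw [fderiv_Lsplit]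
  simp only [jet2_fst, jet2_snd1, jet2_snd2, Pi.zero_apply, Prod.fst, Prod.snd]
  simp [S3, W3, ISa, IS3, WWf, Fin.sum_univ_three, Pi.single_apply]
  try ring

theorem h2s3_lem (φ : (Fin 4 → ℝ) → ℝ) (y : Fin 4 → ℝ) :
    fderiv ℝ Lsplit (jet2 φ y) ((0:ℝ), Pi.single 3 1, 0) = IS3 φ y := by
  rw [fderiv_Lsplit]
  simp only [jet2_fst, jet2_snd1, jet2_snd2, Pi.zero_apply, Prod.fst, Prod.snd]
  simp [S3, W3, ISa, IS3, WWf, Fin.sum_univ_three, Pi.single_apply]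
  try ring

theorem h2r0_lem {φ : (Fin 4 → ℝ) → ℝ} (hφ : ContDiff ℝ (⊤:ℕ∞) φ) (y : Fin 4 → ℝ) :
    fderiv ℝ Lred (jet2 φ y) ((0:ℝ), Pi.single 0 1, 0) = ISa φ 0 y + pd 3 (GA φ 0) y := by
  rw [fderiv_Lred]
  rw [pd_GA hφ 0 y]
  simp only [jet2_fst, jet2_snd1, jet2_snd2, Pi.zero_apply, Prod.fst, Prod.snd]
  simp [S3, W3, T3, zc_eq, ISa, IS3, WWf, SSf, PPf, GP, Fin.sum_univ_three, Pi.single_apply]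
  simp only [pd_comm hφ 3 0 y, pd_comm hφ 3 1 y, pd_comm hφ 3 2 y]
  try ring

theorem h2r1_lem {φ : (Fin 4 → ℝ) → ℝ} (hφ : ContDiff ℝ (⊤:ℕ∞) φ) (y : Fin 4 → ℝ) :
    fderiv ℝ Lred (jet2 φ y) ((0:ℝ), Pi.single 1 1, 0) = ISa φ 1 y + pd 3 (GA φ 1) y := by
  rw [fderiv_Lred]
  rw [pd_GA hφ 1 y]
  simp only [jet2_fst, jet2_snd1, jet2_snd2, Pi.zero_apply, Prod.fst, Prod.snd]
  simp [S3, W3, T3, zc_eq, ISa, IS3, WWf, SSf, PPf, GP, Fin.sum_univ_three, Pi.single_apply]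
  simp only [pd_comm hφ 3 0 y, pd_comm hφ 3 1 y, pd_comm hφ 3 2 y]
  try ring

theorem h2r2_lem {φ : (Fin 4 → ℝ) → ℝ} (hφ : ContDiff ℝ (⊤:ℕ∞) φ) (y : Fin 4 → ℝ) :
    fderiv ℝ Lred (jet2 φ y) ((0:ℝ), Pi.single 2 1, 0) = ISa φ 2 y + pd 3 (GA φ 2) y := by
  rw [fderiv_Lred]
  rw [pd_GA hφ 2 y]
  simp only [jet2_fst, jet2_snd1, jet2_snd2, Pi.zero_apply, Prod.fst, Prod.snd]
  simp [S3, W3, T3, zc_eq, ISa, IS3, WWf, SSf, PPf, GP, Fin.sum_univ_three, Pi.single_apply]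
  simp only [pd_comm hφ 3 0 y, pd_comm hφ 3 1 y, pd_comm hφ 3 2 y]
  try ring

theorem h2r3_lem {φ : (Fin 4 → ℝ) → ℝ} (hφ : ContDiff ℝ (⊤:ℕ∞) φ) (y : Fin 4 → ℝ) :
    fderiv ℝ Lred (jet2 φ y) ((0:ℝ), Pi.single 3 1, 0) = IS3 φ y + (pd 3 (GZ φ) y + GP φ y) := by
  rw [fderiv_Lred]
  rw [pd_GZ hφ y]
  simp only [jet2_fst, jet2_snd1, jet2_snd2, Pi.zero_apply, Prod.fst, Prod.snd]
  simp [S3, W3, T3, zc_eq, ISa, IS3, WWf, SSf, PPf, GP, Fin.sum_univ_three, Pi.single_apply]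
  simp only [pd_comm hφ 3 0 y, pd_comm hφ 3 1 y, pd_comm hφ 3 2 y]
  try ring

theorem hEs00_lem (φ : (Fin 4 → ℝ) → ℝ) (y : Fin 4 → ℝ) :
    fderiv ℝ Lsplit (jet2 φ y) ((0:ℝ), 0, esym 0 0) = GZ φ y := by
  rw [fderiv_Lsplit]
  simp only [jet2_fst, jet2_snd1, jet2_snd2, Pi.zero_apply, Prod.fst, Prod.snd]
  simp [esym, S3, W3, GZ, PPf, SSf, Fin.sum_univ_three]
  try ring

theorem hEr00_lem (φ : (Fin 4 → ℝ) → ℝ) (y : Fin 4 → ℝ) :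
    fderiv ℝ Lred (jet2 φ y) ((0:ℝ), 0, esym 0 0) = GZ φ y := by
  rw [fderiv_Lred]
  simp only [jet2_fst, jet2_snd1, jet2_snd2, Pi.zero_apply, Prod.fst, Prod.snd]
  simp [esym, S3, W3, T3, zc_eq, GZ, GA, PPf, SSf, Fin.sum_univ_three]
  try ring

theorem hEs01_lem (φ : (Fin 4 → ℝ) → ℝ) (y : Fin 4 → ℝ) :
    fderiv ℝ Lsplit (jet2 φ y) ((0:ℝ), 0, esym 0 1) = 0 := by
  rw [fderiv_Lsplit]
  simp only [jet2_fst, jet2_snd1, jet2_snd2, Pi.zero_apply, Prod.fst, Prod.snd]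
  simp [esym, S3, W3, GZ, PPf, SSf, Fin.sum_univ_three]
  try ring

theorem hEr01_lem (φ : (Fin 4 → ℝ) → ℝ) (y : Fin 4 → ℝ) :
    fderiv ℝ Lred (jet2 φ y) ((0:ℝ), 0, esym 0 1) = 0 := by
  rw [fderiv_Lred]
  simp only [jet2_fst, jet2_snd1, jet2_snd2, Pi.zero_apply, Prod.fst, Prod.snd]
  simp [esym, S3, W3, T3, zc_eq, GZ, GA, PPf, SSf, Fin.sum_univ_three]
  try ring

theorem hEs02_lem (φ : (Fin 4 → ℝ) → ℝ) (y : Fin 4 → ℝ) :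
    fderiv ℝ Lsplit (jet2 φ y) ((0:ℝ), 0, esym 0 2) = 0 := by
  rw [fderiv_Lsplit]
  simp only [jet2_fst, jet2_snd1, jet2_snd2, Pi.zero_apply, Prod.fst, Prod.snd]
  simp [esym, S3, W3, GZ, PPf, SSf, Fin.sum_univ_three]
  try ring

theorem hEr02_lem (φ : (Fin 4 → ℝ) → ℝ) (y : Fin 4 → ℝ) :
    fderiv ℝ Lred (jet2 φ y) ((0:ℝ), 0, esym 0 2) = 0 := by
  rw [fderiv_Lred]
  simp only [jet2_fst, jet2_snd1, jet2_snd2, Pi.zero_apply, Prod.fst, Prod.snd]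
  simp [esym, S3, W3, T3, zc_eq, GZ, GA, PPf, SSf, Fin.sum_univ_three]
  try ring

theorem hEs03_lem (φ : (Fin 4 → ℝ) → ℝ) (y : Fin 4 → ℝ) :
    fderiv ℝ Lsplit (jet2 φ y) ((0:ℝ), 0, esym 0 3) = 0 := by
  rw [fderiv_Lsplit]
  simp only [jet2_fst, jet2_snd1, jet2_snd2, Pi.zero_apply, Prod.fst, Prod.snd]
  simp [esym, S3, W3, GZ, PPf, SSf, Fin.sum_univ_three]
  try ring

theorem hEr03_lem (φ : (Fin 4 → ℝ) → ℝ) (y : Fin 4 → ℝ) :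
    fderiv ℝ Lred (jet2 φ y) ((0:ℝ), 0, esym 0 3) = (1/2:ℝ) * GA φ 0 y := by
  rw [fderiv_Lred]
  simp only [jet2_fst, jet2_snd1, jet2_snd2, Pi.zero_apply, Prod.fst, Prod.snd]
  simp [esym, S3, W3, T3, zc_eq, GZ, GA, PPf, SSf, Fin.sum_univ_three]
  try ring

theorem hEs10_lem (φ : (Fin 4 → ℝ) → ℝ) (y : Fin 4 → ℝ) :
    fderiv ℝ Lsplit (jet2 φ y) ((0:ℝ), 0, esym 1 0) = 0 := by
  rw [fderiv_Lsplit]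
  simp only [jet2_fst, jet2_snd1, jet2_snd2, Pi.zero_apply, Prod.fst, Prod.snd]
  simp [esym, S3, W3, GZ, PPf, SSf, Fin.sum_univ_three]
  try ring

theorem hEr10_lem (φ : (Fin 4 → ℝ) → ℝ) (y : Fin 4 → ℝ) :
    fderiv ℝ Lred (jet2 φ y) ((0:ℝ), 0, esym 1 0) = 0 := by
  rw [fderiv_Lred]
  simp only [jet2_fst, jet2_snd1, jet2_snd2, Pi.zero_apply, Prod.fst, Prod.snd]
  simp [esym, S3, W3, T3, zc_eq, GZ, GA, PPf, SSf, Fin.sum_univ_three]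
  try ring

theorem hEs11_lem (φ : (Fin 4 → ℝ) → ℝ) (y : Fin 4 → ℝ) :
    fderiv ℝ Lsplit (jet2 φ y) ((0:ℝ), 0, esym 1 1) = -GZ φ y := by
  rw [fderiv_Lsplit]
  simp only [jet2_fst, jet2_snd1, jet2_snd2, Pi.zero_apply, Prod.fst, Prod.snd]
  simp [esym, S3, W3, GZ, PPf, SSf, Fin.sum_univ_three]
  try ring

theorem hEr11_lem (φ : (Fin 4 → ℝ) → ℝ) (y : Fin 4 → ℝ) :
    fderiv ℝ Lred (jet2 φ y) ((0:ℝ), 0, esym 1 1) = -GZ φ y := by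
  rw [fderiv_Lred]
  simp only [jet2_fst, jet2_snd1, jet2_snd2, Pi.zero_apply, Prod.fst, Prod.snd]
  simp [esym, S3, W3, T3, zc_eq, GZ, GA, PPf, SSf, Fin.sum_univ_three]
  try ring

theorem hEs12_lem (φ : (Fin 4 → ℝ) → ℝ) (y : Fin 4 → ℝ) :
    fderiv ℝ Lsplit (jet2 φ y) ((0:ℝ), 0, esym 1 2) = 0 := by
  rw [fderiv_Lsplit]
  simp only [jet2_fst, jet2_snd1, jet2_snd2, Pi.zero_apply, Prod.fst, Prod.snd]
  simp [esym, S3, W3, GZ, PPf, SSf, Fin.sum_univ_three]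
  try ring

theorem hEr12_lem (φ : (Fin 4 → ℝ) → ℝ) (y : Fin 4 → ℝ) :
    fderiv ℝ Lred (jet2 φ y) ((0:ℝ), 0, esym 1 2) = 0 := by
  rw [fderiv_Lred]
  simp only [jet2_fst, jet2_snd1, jet2_snd2, Pi.zero_apply, Prod.fst, Prod.snd]
  simp [esym, S3, W3, T3, zc_eq, GZ, GA, PPf, SSf, Fin.sum_univ_three]
  try ring

theorem hEs13_lem (φ : (Fin 4 → ℝ) → ℝ) (y : Fin 4 → ℝ) :
    fderiv ℝ Lsplit (jet2 φ y) ((0:ℝ), 0, esym 1 3) = 0 := by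
  rw [fderiv_Lsplit]
  simp only [jet2_fst, jet2_snd1, jet2_snd2, Pi.zero_apply, Prod.fst, Prod.snd]
  simp [esym, S3, W3, GZ, PPf, SSf, Fin.sum_univ_three]
  try ring

theorem hEr13_lem (φ : (Fin 4 → ℝ) → ℝ) (y : Fin 4 → ℝ) :
    fderiv ℝ Lred (jet2 φ y) ((0:ℝ), 0, esym 1 3) = (1/2:ℝ) * GA φ 1 y := by
  rw [fderiv_Lred]
  simp only [jet2_fst, jet2_snd1, jet2_snd2, Pi.zero_apply, Prod.fst, Prod.snd]
  simp [esym, S3, W3, T3, zc_eq, GZ, GA, PPf, SSf, Fin.sum_univ_three]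
  try ring

theorem hEs20_lem (φ : (Fin 4 → ℝ) → ℝ) (y : Fin 4 → ℝ) :
    fderiv ℝ Lsplit (jet2 φ y) ((0:ℝ), 0, esym 2 0) = 0 := by
  rw [fderiv_Lsplit]
  simp only [jet2_fst, jet2_snd1, jet2_snd2, Pi.zero_apply, Prod.fst, Prod.snd]
  simp [esym, S3, W3, GZ, PPf, SSf, Fin.sum_univ_three]
  try ring

theorem hEr20_lem (φ : (Fin 4 → ℝ) → ℝ) (y : Fin 4 → ℝ) :
    fderiv ℝ Lred (jet2 φ y) ((0:ℝ), 0, esym 2 0) = 0 := by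
  rw [fderiv_Lred]
  simp only [jet2_fst, jet2_snd1, jet2_snd2, Pi.zero_apply, Prod.fst, Prod.snd]
  simp [esym, S3, W3, T3, zc_eq, GZ, GA, PPf, SSf, Fin.sum_univ_three]
  try ring

theorem hEs21_lem (φ : (Fin 4 → ℝ) → ℝ) (y : Fin 4 → ℝ) :
    fderiv ℝ Lsplit (jet2 φ y) ((0:ℝ), 0, esym 2 1) = 0 := by
  rw [fderiv_Lsplit]
  simp only [jet2_fst, jet2_snd1, jet2_snd2, Pi.zero_apply, Prod.fst, Prod.snd]
  simp [esym, S3, W3, GZ, PPf, SSf, Fin.sum_univ_three]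
  try ring

theorem hEr21_lem (φ : (Fin 4 → ℝ) → ℝ) (y : Fin 4 → ℝ) :
    fderiv ℝ Lred (jet2 φ y) ((0:ℝ), 0, esym 2 1) = 0 := by
  rw [fderiv_Lred]
  simp only [jet2_fst, jet2_snd1, jet2_snd2, Pi.zero_apply, Prod.fst, Prod.snd]
  simp [esym, S3, W3, T3, zc_eq, GZ, GA, PPf, SSf, Fin.sum_univ_three]
  try ring

theorem hEs22_lem (φ : (Fin 4 → ℝ) → ℝ) (y : Fin 4 → ℝ) :
    fderiv ℝ Lsplit (jet2 φ y) ((0:ℝ), 0, esym 2 2) = -GZ φ y := by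
  rw [fderiv_Lsplit]
  simp only [jet2_fst, jet2_snd1, jet2_snd2, Pi.zero_apply, Prod.fst, Prod.snd]
  simp [esym, S3, W3, GZ, PPf, SSf, Fin.sum_univ_three]
  try ring

theorem hEr22_lem (φ : (Fin 4 → ℝ) → ℝ) (y : Fin 4 → ℝ) :
    fderiv ℝ Lred (jet2 φ y) ((0:ℝ), 0, esym 2 2) = -GZ φ y := by
  rw [fderiv_Lred]
  simp only [jet2_fst, jet2_snd1, jet2_snd2, Pi.zero_apply, Prod.fst, Prod.snd]
  simp [esym, S3, W3, T3, zc_eq, GZ, GA, PPf, SSf, Fin.sum_univ_three]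
  try ring

theorem hEs23_lem (φ : (Fin 4 → ℝ) → ℝ) (y : Fin 4 → ℝ) :
    fderiv ℝ Lsplit (jet2 φ y) ((0:ℝ), 0, esym 2 3) = 0 := by
  rw [fderiv_Lsplit]
  simp only [jet2_fst, jet2_snd1, jet2_snd2, Pi.zero_apply, Prod.fst, Prod.snd]
  simp [esym, S3, W3, GZ, PPf, SSf, Fin.sum_univ_three]
  try ring

theorem hEr23_lem (φ : (Fin 4 → ℝ) → ℝ) (y : Fin 4 → ℝ) :
    fderiv ℝ Lred (jet2 φ y) ((0:ℝ), 0, esym 2 3) = (1/2:ℝ) * GA φ 2 y := by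
  rw [fderiv_Lred]
  simp only [jet2_fst, jet2_snd1, jet2_snd2, Pi.zero_apply, Prod.fst, Prod.snd]
  simp [esym, S3, W3, T3, zc_eq, GZ, GA, PPf, SSf, Fin.sum_univ_three]
  try ring

theorem hEs30_lem (φ : (Fin 4 → ℝ) → ℝ) (y : Fin 4 → ℝ) :
    fderiv ℝ Lsplit (jet2 φ y) ((0:ℝ), 0, esym 3 0) = 0 := by
  rw [fderiv_Lsplit]
  simp only [jet2_fst, jet2_snd1, jet2_snd2, Pi.zero_apply, Prod.fst, Prod.snd]
  simp [esym, S3, W3, GZ, PPf, SSf, Fin.sum_univ_three]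
  try ring

theorem hEr30_lem (φ : (Fin 4 → ℝ) → ℝ) (y : Fin 4 → ℝ) :
    fderiv ℝ Lred (jet2 φ y) ((0:ℝ), 0, esym 3 0) = (1/2:ℝ) * GA φ 0 y := by
  rw [fderiv_Lred]
  simp only [jet2_fst, jet2_snd1, jet2_snd2, Pi.zero_apply, Prod.fst, Prod.snd]
  simp [esym, S3, W3, T3, zc_eq, GZ, GA, PPf, SSf, Fin.sum_univ_three]
  try ring

theorem hEs31_lem (φ : (Fin 4 → ℝ) → ℝ) (y : Fin 4 → ℝ) :
    fderiv ℝ Lsplit (jet2 φ y) ((0:ℝ), 0, esym 3 1) = 0 := by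
  rw [fderiv_Lsplit]
  simp only [jet2_fst, jet2_snd1, jet2_snd2, Pi.zero_apply, Prod.fst, Prod.snd]
  simp [esym, S3, W3, GZ, PPf, SSf, Fin.sum_univ_three]
  try ring

theorem hEr31_lem (φ : (Fin 4 → ℝ) → ℝ) (y : Fin 4 → ℝ) :
    fderiv ℝ Lred (jet2 φ y) ((0:ℝ), 0, esym 3 1) = (1/2:ℝ) * GA φ 1 y := by
  rw [fderiv_Lred]
  simp only [jet2_fst, jet2_snd1, jet2_snd2, Pi.zero_apply, Prod.fst, Prod.snd]
  simp [esym, S3, W3, T3, zc_eq, GZ, GA, PPf, SSf, Fin.sum_univ_three]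
  try ring

theorem hEs32_lem (φ : (Fin 4 → ℝ) → ℝ) (y : Fin 4 → ℝ) :
    fderiv ℝ Lsplit (jet2 φ y) ((0:ℝ), 0, esym 3 2) = 0 := by
  rw [fderiv_Lsplit]
  simp only [jet2_fst, jet2_snd1, jet2_snd2, Pi.zero_apply, Prod.fst, Prod.snd]
  simp [esym, S3, W3, GZ, PPf, SSf, Fin.sum_univ_three]
  try ring

theorem hEr32_lem (φ : (Fin 4 → ℝ) → ℝ) (y : Fin 4 → ℝ) :
    fderiv ℝ Lred (jet2 φ y) ((0:ℝ), 0, esym 3 2) = (1/2:ℝ) * GA φ 2 y := by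
  rw [fderiv_Lred]
  simp only [jet2_fst, jet2_snd1, jet2_snd2, Pi.zero_apply, Prod.fst, Prod.snd]
  simp [esym, S3, W3, T3, zc_eq, GZ, GA, PPf, SSf, Fin.sum_univ_three]
  try ring

theorem hEs33_lem (φ : (Fin 4 → ℝ) → ℝ) (y : Fin 4 → ℝ) :
    fderiv ℝ Lsplit (jet2 φ y) ((0:ℝ), 0, esym 3 3) = -GZ φ y := by
  rw [fderiv_Lsplit]
  simp only [jet2_fst, jet2_snd1, jet2_snd2, Pi.zero_apply, Prod.fst, Prod.snd]
  simp [esym, S3, W3, GZ, PPf, SSf, Fin.sum_univ_three]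
  try ring

theorem hEr33_lem (φ : (Fin 4 → ℝ) → ℝ) (y : Fin 4 → ℝ) :
    fderiv ℝ Lred (jet2 φ y) ((0:ℝ), 0, esym 3 3) = 0 := by
  rw [fderiv_Lred]
  simp only [jet2_fst, jet2_snd1, jet2_snd2, Pi.zero_apply, Prod.fst, Prod.snd]
  simp [esym, S3, W3, T3, zc_eq, GZ, GA, PPf, SSf, Fin.sum_univ_three]
  try ring

end smoothness

/-- **Reduction of the evolutionary order by a total `z`-derivative** (Section 3.6).
For every smooth `φ : ℝ⁴ → ℝ`, `L′[φ] = L[φ] + ∂_z(F[φ])` as smooth functions on `ℝ⁴`;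
in particular `L′` is of first order in `z` (it does not depend on the variable
`φ_{,zz}`) while `L` is of second order in `z`, and `L` and `L′` have identical
Euler–Lagrange expressions. -/
theorem reduced_lagrangian_differs_by_total_derivative
    (φ : (Fin 4 → ℝ) → ℝ) (hφ : ContDiff ℝ (⊤ : ℕ∞) φ) :
    (∀ x : Fin 4 → ℝ,
      Lred (jet2 φ x) = Lsplit (jet2 φ x) + pd zc (fun y => Fgen (jet2 φ y)) x)
    ∧ (∀ w w' : Jet2, w.1 = w'.1 → w.2.1 = w'.2.1 →
        (∀ μ ν : Fin 4, ¬(μ = zc ∧ ν = zc) → w.2.2 μ ν = w'.2.2 μ ν) →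
        Lred w = Lred w')
    ∧ (∀ x : Fin 4 → ℝ, ELscalar Lsplit φ x = ELscalar Lred φ x) := by
  constructor
  · -- Part 1: L' = L + D_z F
    intro x
    have hFg : (fun y => Fgen (jet2 φ y)) = fun y => φ y * GP φ y := by
      funext y
      simp only [Fgen, zc_eq, jet2_fst, jet2_snd1, GP, SSf, S3]
      ring
    rw [zc_eq, hFg, pdd_mul 3 x φ (GP φ) hφ (sm_GP hφ), pd_GP hφ x]
    simp only [Lred, Lsplit, S3, W3, zc_eq, jet2_fst, jet2_snd1, jet2_snd2, GP, SSf]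
    simp only [Fin.sum_univ_three, cs0, cs1, cs2, eta0, eta1, eta2]
    simp only [pd_comm hφ 3 0 x, pd_comm hφ 3 1 x, pd_comm hφ 3 2 x]
    ring
  constructor
  · -- Part 2: L' is of first order in z
    rintro w w' h1 h2 h3
    have e2 : ∀ a : Fin 3, w.2.2 a.castSucc a.castSucc = w'.2.2 a.castSucc a.castSucc :=
      fun a => h3 _ _ (fun h => (Fin.castSucc_lt_last a).ne h.1)
    have e3 : ∀ a : Fin 3, w.2.2 a.castSucc zc = w'.2.2 a.castSucc zc :=
      fun a => h3 _ _ (fun h => (Fin.castSucc_lt_last a).ne h.1)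
    simp only [Lred, S3, W3, h1, h2, e2, e3]
  · -- Part 3: identical Euler--Lagrange expressions
    intro x
    have hGA0 := sm_GA hφ 0
    have hGA1 := sm_GA hφ 1
    have hGA2 := sm_GA hφ 2
    have hGZ := sm_GZ hφ
    have hGP := sm_GP hφ
    simp only [ELscalar, Fin.sum_univ_four]
    simp only [h1s_lem φ, h1r_lem φ, h2s0_lem φ, h2s1_lem φ, h2s2_lem φ, h2s3_lem φ,
      h2r0_lem hφ, h2r1_lem hφ, h2r2_lem hφ, h2r3_lem hφ,
      hEs00_lem φ, hEs01_lem φ, hEs02_lem φ, hEs03_lem φ,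
      hEs10_lem φ, hEs11_lem φ, hEs12_lem φ, hEs13_lem φ,
      hEs20_lem φ, hEs21_lem φ, hEs22_lem φ, hEs23_lem φ,
      hEs30_lem φ, hEs31_lem φ, hEs32_lem φ, hEs33_lem φ,
      hEr00_lem φ, hEr01_lem φ, hEr02_lem φ, hEr03_lem φ,
      hEr10_lem φ, hEr11_lem φ, hEr12_lem φ, hEr13_lem φ,
      hEr20_lem φ, hEr21_lem φ, hEr22_lem φ, hEr23_lem φ,
      hEr30_lem φ, hEr31_lem φ, hEr32_lem φ, hEr33_lem φ]
    simp only [pdd_zero_fun, pdd_zero]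
    rw [pdd_add 0 x (ISa φ 0) (pd 3 (GA φ 0)) (sm_ISa hφ 0) (hGA0.pd 3),
      pdd_add 1 x (ISa φ 1) (pd 3 (GA φ 1)) (sm_ISa hφ 1) (hGA1.pd 3),
      pdd_add 2 x (ISa φ 2) (pd 3 (GA φ 2)) (sm_ISa hφ 2) (hGA2.pd 3),
      pdd_add 3 x (IS3 φ) (fun y => pd 3 (GZ φ) y + GP φ y) (sm_IS3 hφ)
        ((hGZ.pd 3).add hGP),
      pdd_add 3 x (pd 3 (GZ φ)) (GP φ) (hGZ.pd 3) hGP]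
    rw [pdd_cmul_fun 3 (1/2:ℝ) (GA φ 0) hGA0, pdd_cmul_fun 0 (1/2:ℝ) (GA φ 0) hGA0,
      pdd_cmul_fun 3 (1/2:ℝ) (GA φ 1) hGA1, pdd_cmul_fun 1 (1/2:ℝ) (GA φ 1) hGA1,
      pdd_cmul_fun 3 (1/2:ℝ) (GA φ 2) hGA2, pdd_cmul_fun 2 (1/2:ℝ) (GA φ 2) hGA2]
    rw [pdd_cmul 0 x (1/2:ℝ) (pd 3 (GA φ 0)) (hGA0.pd 3),
      pdd_cmul 3 x (1/2:ℝ) (pd 0 (GA φ 0)) (hGA0.pd 0),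
      pdd_cmul 1 x (1/2:ℝ) (pd 3 (GA φ 1)) (hGA1.pd 3),
      pdd_cmul 3 x (1/2:ℝ) (pd 1 (GA φ 1)) (hGA1.pd 1),
      pdd_cmul 2 x (1/2:ℝ) (pd 3 (GA φ 2)) (hGA2.pd 3),
      pdd_cmul 3 x (1/2:ℝ) (pd 2 (GA φ 2)) (hGA2.pd 2)]
    rw [pdd_neg_fun 3 (GZ φ), pdd_neg 3 x (pd 3 (GZ φ))]
    rw [show pd 3 (pd 0 (GA φ 0)) x = pd 0 (pd 3 (GA φ 0)) x from pd_comm hGA0 3 0 x,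
      show pd 3 (pd 1 (GA φ 1)) x = pd 1 (pd 3 (GA φ 1)) x from pd_comm hGA1 3 1 x,
      show pd 3 (pd 2 (GA φ 2)) x = pd 2 (pd 3 (GA φ 2)) x from pd_comm hGA2 3 2 x]
    rw [pd_GP hφ x]
    simp only [PPf, SSf, WWf, Fin.sum_univ_three, eta0, eta1, eta2, cs0, cs1, cs2]
    simp only [pd_comm hφ 3 0 x, pd_comm hφ 3 1 x, pd_comm hφ 3 2 x]
    ring


end
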